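/- Let y : ℝ^{d_0} → ℝ^{d_L} be the feedforward network y(x) = Φ_L(W_L Φ_{L-1}(W_{L-1} ··· Φ_1(W_1 x + b_1) ··· ) + b_L), where each activation Φ_l : ℝ → ℝ is differentiable and applied coordinatewise. If (W_PL)_{i_L i_0} = 0, then the partial derivative ∂y_{i_L}/∂x_{i_0} equals 0 for every x ∈ ℝ^{d_0}. -/

import Mathlib

open Matrix

/-- The ordinary matrix product `M_L * M_{L-1} * ⋯ * M_1` of a chain of matrices
`M_l ∈ ℝ^{d_l × d_{l-1}}` (the empty product being the identity). -/
noncomputable def chainProd (d : ℕ → ℕ)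
    (M : ∀ l : ℕ, Matrix (Fin (d (l + 1))) (Fin (d l)) ℝ) :
    (L : ℕ) → Matrix (Fin (d L)) (Fin (d 0)) ℝ
  | 0 => 1
  | L + 1 => M L * chainProd d M L

/-- The feedforward network
`y(x) = Φ_L(W_L Φ_{L-1}(W_{L-1} ⋯ Φ_1(W_1 x + b_1) ⋯) + b_L)`,
with element-wise activation functions `Φ_l : ℝ → ℝ` applied coordinatewise. -/
noncomputable def netOut (d : ℕ → ℕ)
    (W : ∀ l : ℕ, Matrix (Fin (d (l + 1))) (Fin (d l)) ℝ)
    (b : ∀ l : ℕ, Fin (d (l + 1)) → ℝ) (Φ : ℕ → ℝ → ℝ) :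
    (L : ℕ) → (Fin (d 0) → ℝ) → Fin (d L) → ℝ
  | 0, x => x
  | L + 1, x => fun i => Φ L ((W L).mulVec (netOut d W b Φ L x) i + b L i)

lemma chainProd_sq_nonneg (d : ℕ → ℕ)
    (W : ∀ l : ℕ, Matrix (Fin (d (l + 1))) (Fin (d l)) ℝ) :
    ∀ (L : ℕ) (i : Fin (d L)) (j : Fin (d 0)),
      0 ≤ chainProd d (fun l => (W l).map (fun a => a ^ 2)) L i j := by
  intro L
  induction L with
  | zero =>
    intro i j
    simp only [chainProd, Matrix.one_apply]
    split <;> norm_num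
  | succ L ih =>
    intro i j
    simp only [chainProd, Matrix.mul_apply]
    refine Finset.sum_nonneg fun k _ => mul_nonneg ?_ (ih k j)
    simp [Matrix.map_apply, sq_nonneg]

lemma netOut_differentiable (d : ℕ → ℕ)
    (W : ∀ l : ℕ, Matrix (Fin (d (l + 1))) (Fin (d l)) ℝ)
    (b : ∀ l : ℕ, Fin (d (l + 1)) → ℝ) (Φ : ℕ → ℝ → ℝ)
    (hΦ : ∀ l, Differentiable ℝ (Φ l)) :
    ∀ (L : ℕ) (i : Fin (d L)),
      Differentiable ℝ (fun x => netOut d W b Φ L x i) := by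
  intro L
  induction L with
  | zero =>
    intro i
    exact fun x => (differentiable_pi.mp differentiable_id i) x
  | succ L ih =>
    intro i
    refine (hΦ L).comp ?_
    refine Differentiable.add_const _ ?_
    simp only [Matrix.mulVec, dotProduct]
    exact Differentiable.fun_sum fun j _ => (ih j).const_mul _

theorem main_aux (d : ℕ → ℕ)
    (W : ∀ l : ℕ, Matrix (Fin (d (l + 1))) (Fin (d l)) ℝ)
    (b : ∀ l : ℕ, Fin (d (l + 1)) → ℝ) (Φ : ℕ → ℝ → ℝ)
    (hΦ : ∀ l, Differentiable ℝ (Φ l)) (i0 : Fin (d 0)) :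
    ∀ (L : ℕ) (iL : Fin (d L)),
      chainProd d (fun l => (W l).map (fun a => a ^ 2)) L iL i0 = 0 →
      ∀ x : Fin (d 0) → ℝ,
        fderiv ℝ (fun x => netOut d W b Φ L x iL) x (Pi.single i0 1) = 0 := by
  intro L
  induction L with
  | zero =>
    intro iL hz x
    have hne : iL ≠ i0 := by
      intro h; subst h
      simp [chainProd, Matrix.one_apply] at hz
    have : (fun x : Fin (d 0) → ℝ => netOut d W b Φ 0 x iL)
        = fun x => (ContinuousLinearMap.proj (R := ℝ) (φ := fun _ : Fin (d 0) => ℝ) iL) x := by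
      rfl
    rw [this, ContinuousLinearMap.fderiv]
    simp [Pi.single_eq_of_ne hne]
  | succ L ih =>
    intro iL hz x
    set A := fun l => (W l).map (fun a : ℝ => a ^ 2) with hA
    have hsum : ∑ j, A L iL j * chainProd d A L j i0 = 0 := by
      simpa [chainProd, Matrix.mul_apply] using hz
    have hterm : ∀ j, A L iL j * chainProd d A L j i0 = 0 := by
      have := (Finset.sum_eq_zero_iff_of_nonneg (fun j _ =>
        mul_nonneg (by simp [hA, Matrix.map_apply, sq_nonneg])
          (chainProd_sq_nonneg d W L j i0))).mp hsum
      intro j; exact this j (Finset.mem_univ j)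
    set g : (Fin (d 0) → ℝ) → ℝ :=
      fun x => (W L).mulVec (netOut d W b Φ L x) iL + b L iL with hg
    have hgdiff : Differentiable ℝ g := by
      refine Differentiable.add_const _ ?_
      simp only [Matrix.mulVec, dotProduct]
      exact Differentiable.fun_sum fun j _ =>
        (netOut_differentiable d W b Φ hΦ L j).const_mul _
    have hcomp : fderiv ℝ (fun x => netOut d W b Φ (L + 1) x iL) x
        = (fderiv ℝ (Φ L) (g x)).comp (fderiv ℝ g x) := by
      exact fderiv_comp x ((hΦ L) (g x)) (hgdiff x)
    rw [hcomp]
    have hgz : fderiv ℝ g x (Pi.single i0 1) = 0 := by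
      have hrw : g = fun x => (∑ j, W L iL j * netOut d W b Φ L x j) + b L iL := by
        funext y; simp [hg, Matrix.mulVec, dotProduct]
      rw [hrw]
      rw [fderiv_add_const]
      rw [fderiv_fun_sum (fun j _ => ((netOut_differentiable d W b Φ hΦ L j).const_mul (W L iL j)) x)]
      rw [ContinuousLinearMap.sum_apply]
      refine Finset.sum_eq_zero fun j _ => ?_
      rw [fderiv_const_mul ((netOut_differentiable d W b Φ hΦ L j) x)]
      rcases mul_eq_zero.mp (hterm j) with h | h
      · have hw : W L iL j = 0 := by
          have h2 : (W L iL j) ^ 2 = 0 := by simpa [hA, Matrix.map_apply] using h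
          exact pow_eq_zero_iff two_ne_zero |>.mp h2
        simp [hw]
      · simp [ih j h x]
    simp [hgz]

/-- If the `(i_L, i_0)` entry of the path lasso matrix
`W_PL = sqrt((W_L)² ⋯ (W_1)²)` is zero, then the partial derivative
`∂y_{i_L}/∂x_{i_0}` of the feedforward network vanishes at every `x ∈ ℝ^{d_0}`. -/
theorem pathLasso_zero_implies_partialDeriv_zero (L : ℕ) (d : ℕ → ℕ)
    (W : ∀ l : ℕ, Matrix (Fin (d (l + 1))) (Fin (d l)) ℝ)
    (b : ∀ l : ℕ, Fin (d (l + 1)) → ℝ) (Φ : ℕ → ℝ → ℝ)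
    (hΦ : ∀ l, Differentiable ℝ (Φ l))
    (i0 : Fin (d 0)) (iL : Fin (d L))
    (hzero :
      Real.sqrt ((chainProd d (fun l => (W l).map (fun a => a ^ 2)) L) iL i0) = 0) :
    ∀ x : Fin (d 0) → ℝ,
      fderiv ℝ (fun x => netOut d W b Φ L x iL) x (Pi.single i0 1) = 0 := by
  have hent : chainProd d (fun l => (W l).map (fun a => a ^ 2)) L iL i0 = 0 :=
    (Real.sqrt_eq_zero (chainProd_sq_nonneg d W L iL i0)).mp hzero
  exact main_aux d W b Φ hΦ i0 L iL hent
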